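/- Datko–Pazy type criterion via entry times: if ‖T(t)‖ ≤ 1 for all t and ∫_0^∞ ‖T(t)‖^p dt < ∞ for some 0 < p < ∞, then the relative entry times u_r satisfy lim_r u_r < ∞, hence the semigroup is exponentially stable. -/

import Mathlib

open scoped ENNReal
open Filter Topology MeasureTheory

/-- Final entry time of `x` into the ball of radius `e^{-r}`:
`t_r(x) = inf { t ≥ 0 : ‖T(t')x‖ ≤ e^{-r} for all t' ≥ t }`, with `inf ∅ = ∞`. -/
noncomputable def entryTime {X : Type*} [NormedAddCommGroup X] [NormedSpace ℝ X]
    (T : ℝ → X →L[ℝ] X) (r : ℕ) (x : X) : ℝ≥0∞ :=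
  sInf {t : ℝ≥0∞ | ∀ t' : ℝ, 0 ≤ t' → t ≤ ENNReal.ofReal t' →
    ‖T t' x‖ ≤ Real.exp (-(r : ℝ))}

/-- `t_r = sup { t_r(x) : ‖x‖ ≤ 1 }`. -/
noncomputable def ballEntryTime {X : Type*} [NormedAddCommGroup X] [NormedSpace ℝ X]
    (T : ℝ → X →L[ℝ] X) (r : ℕ) : ℝ≥0∞ :=
  ⨆ x ∈ {x : X | ‖x‖ ≤ 1}, entryTime T r x

/-- Relative entry time `u_r = t_{r+1} - t_r`, with `u_r = ∞` when `t_{r+1} = ∞`. -/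
noncomputable def relEntryTime {X : Type*} [NormedAddCommGroup X] [NormedSpace ℝ X]
    (T : ℝ → X →L[ℝ] X) (r : ℕ) : ℝ≥0∞ :=
  if ballEntryTime T (r + 1) = ⊤ then ⊤
  else ballEntryTime T (r + 1) - ballEntryTime T r

/-- Datko–Pazy criterion via entry times: for a contraction C₀-semigroup with
`∫_0^∞ ‖T(t)‖^p dt < ∞` for some `0 < p < ∞`, the relative entry times satisfy
`lim_r u_r < ∞`, hence the semigroup is exponentially stable. -/
theorem stable_of_datko_pazy {X : Type*} [NormedAddCommGroup X]
    [NormedSpace ℝ X] (T : ℝ → X →L[ℝ] X)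
    (hT0 : T 0 = 1)
    (hTmul : ∀ s t : ℝ, 0 ≤ s → 0 ≤ t → T (s + t) = (T s).comp (T t))
    (hTcont : ∀ x : X, ContinuousOn (fun t => T t x) (Set.Ici 0))
    (hcontr : ∀ t : ℝ, 0 ≤ t → ‖T t‖ ≤ 1)
    (p : ℝ) (hp : 0 < p)
    (hint : ∫⁻ t in Set.Ioi (0 : ℝ), ENNReal.ofReal (‖T t‖ ^ p) < ⊤) :
    Filter.limsup (fun r => relEntryTime T r) Filter.atTop < ⊤ ∧
    ∃ M : ℝ, 0 < M ∧ ∃ ρ : ℝ, 0 < ρ ∧ ∀ t : ℝ, 0 ≤ t →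
      ‖T t‖ ≤ M * Real.exp (-ρ * t) := by
  have hmul : ∀ s t : ℝ, 0 ≤ s → 0 ≤ t → ‖T (s + t)‖ ≤ ‖T s‖ * ‖T t‖ := by
    intro s t hs ht
    rw [hTmul s t hs ht]
    exact (T s).opNorm_comp_le (T t)
  have hanti : ∀ s t : ℝ, 0 ≤ s → s ≤ t → ‖T t‖ ≤ ‖T s‖ := by
    intro s t hs hst
    have h1 : t = (t - s) + s := by ring
    calc ‖T t‖ = ‖T ((t - s) + s)‖ := by rw [← h1]
    _ ≤ ‖T (t - s)‖ * ‖T s‖ := hmul _ _ (by linarith) hs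
    _ ≤ 1 * ‖T s‖ := mul_le_mul_of_nonneg_right (hcontr _ (by linarith)) (norm_nonneg _)
    _ = ‖T s‖ := one_mul _
  have hpow : ∀ (n : ℕ) (s : ℝ), 0 ≤ s → ‖T ((n : ℝ) * s)‖ ≤ ‖T s‖ ^ n := by
    intro n s hs
    induction n with
    | zero => simpa [hT0] using (show ‖(1 : X →L[ℝ] X)‖ ≤ 1 from ContinuousLinearMap.norm_id_le)
    | succ n ih =>
      have heq : ((n + 1 : ℕ) : ℝ) * s = s + (n : ℝ) * s := by push_cast; ring
      rw [heq]
      calc ‖T (s + (n : ℝ) * s)‖ ≤ ‖T s‖ * ‖T ((n : ℝ) * s)‖ := hmul _ _ hs (by positivity)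
      _ ≤ ‖T s‖ * ‖T s‖ ^ n := mul_le_mul_of_nonneg_left ih (norm_nonneg _)
      _ = ‖T s‖ ^ (n + 1) := by ring
  have hlt : ∃ s : ℝ, 0 < s ∧ ‖T s‖ < 1 := by
    by_contra h
    push_neg at h
    have htop : (⊤ : ℝ≥0∞) ≤ ∫⁻ t in Set.Ioi (0 : ℝ), ENNReal.ofReal (‖T t‖ ^ p) := by
      calc (⊤ : ℝ≥0∞) = 1 * volume (Set.Ioi (0 : ℝ)) := by simp [Real.volume_Ioi]
      _ = ∫⁻ _ in Set.Ioi (0 : ℝ), (1 : ℝ≥0∞) := by rw [setLIntegral_const]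
      _ ≤ _ := by
          refine setLIntegral_mono' measurableSet_Ioi (fun t ht => ?_)
          have h1 : (1 : ℝ) ≤ ‖T t‖ := h t ht
          have h2 : (1 : ℝ) ≤ ‖T t‖ ^ p := Real.one_le_rpow h1 hp.le
          simpa using ENNReal.one_le_ofReal.mpr h2
    exact absurd hint (by simp [top_le_iff.mp htop])
  obtain ⟨s, hs0, hs1⟩ := hlt
  obtain ⟨n, hn⟩ := exists_pow_lt_of_lt_one (Real.exp_pos (-1)) hs1
  set s₀ : ℝ := ((n + 1 : ℕ) : ℝ) * s with hs₀def
  have hs₀pos : 0 < s₀ := by positivity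
  have hTs₀ : ‖T s₀‖ ≤ Real.exp (-1) := by
    calc ‖T s₀‖ ≤ ‖T s‖ ^ (n + 1) := hpow (n + 1) s hs0.le
    _ ≤ ‖T s‖ ^ n := by
        rw [pow_succ]
        exact mul_le_of_le_one_right (pow_nonneg (norm_nonneg _) n) (hcontr s hs0.le)
    _ ≤ Real.exp (-1) := hn.le
  have hdecay : ∀ (r : ℕ) (t : ℝ), (r : ℝ) * s₀ ≤ t → ‖T t‖ ≤ Real.exp (-(r : ℝ)) := by
    intro r t hrt
    have h0 : (0 : ℝ) ≤ (r : ℝ) * s₀ := by positivity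
    calc ‖T t‖ ≤ ‖T ((r : ℝ) * s₀)‖ := hanti _ _ h0 hrt
    _ ≤ ‖T s₀‖ ^ r := hpow r s₀ hs₀pos.le
    _ ≤ Real.exp (-1) ^ r := pow_le_pow_left₀ (norm_nonneg _) hTs₀ r
    _ = Real.exp (-(r : ℝ)) := by rw [← Real.exp_nat_mul]; congr 1; ring
  have hent_le : ∀ (r : ℕ) (x : X), ‖x‖ ≤ 1 →
      entryTime T r x ≤ ENNReal.ofReal ((r : ℝ) * s₀) := by
    intro r x hx
    refine sInf_le (fun t' ht'0 hle => ?_)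
    have hrt : (r : ℝ) * s₀ ≤ t' := (ENNReal.ofReal_le_ofReal_iff ht'0).mp hle
    calc ‖T t' x‖ ≤ ‖T t'‖ * ‖x‖ := (T t').le_opNorm x
    _ ≤ ‖T t'‖ * 1 := mul_le_mul_of_nonneg_left hx (norm_nonneg _)
    _ = ‖T t'‖ := mul_one _
    _ ≤ _ := hdecay r t' hrt
  have hball_le : ∀ r : ℕ, ballEntryTime T r ≤ ENNReal.ofReal ((r : ℝ) * s₀) :=
    fun r => iSup₂_le fun x hx => hent_le r x hx
  have hball_ne : ∀ r : ℕ, ballEntryTime T r ≠ ⊤ :=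
    fun r => ((hball_le r).trans_lt ENNReal.ofReal_lt_top).ne
  have hshift : ∀ (r : ℕ) (x : X),
      entryTime T (r + 1) x ≤ entryTime T r x + ENNReal.ofReal s₀ := by
    intro r x
    rcases eq_or_ne (entryTime T r x) ⊤ with h | h
    · simp [h]
    refine ENNReal.le_of_forall_pos_le_add (fun ε hε _ => ?_)
    refine sInf_le (fun t' ht'0 hle => ?_)
    have hfin : entryTime T r x + ENNReal.ofReal s₀ < ⊤ :=
      ENNReal.add_lt_top.mpr ⟨h.lt_top, ENNReal.ofReal_lt_top⟩
    have hlt : entryTime T r x + ENNReal.ofReal s₀ < ENNReal.ofReal t' := by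
      calc entryTime T r x + ENNReal.ofReal s₀
          < entryTime T r x + ENNReal.ofReal s₀ + ε :=
            ENNReal.lt_add_right hfin.ne (by exact_mod_cast hε.ne')
      _ ≤ _ := hle
    have hs₀t' : s₀ ≤ t' := by
      have h2 : ENNReal.ofReal s₀ ≤ ENNReal.ofReal t' := le_trans le_add_self hlt.le
      exact (ENNReal.ofReal_le_ofReal_iff ht'0).mp h2
    have hsplit : ENNReal.ofReal t' = ENNReal.ofReal (t' - s₀) + ENNReal.ofReal s₀ := by
      rw [← ENNReal.ofReal_add (by linarith) hs₀pos.le]; congr 1; ring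
    have hlt2 : entryTime T r x < ENNReal.ofReal (t' - s₀) := by
      rw [hsplit] at hlt
      exact (ENNReal.add_lt_add_iff_right ENNReal.ofReal_ne_top).mp hlt
    rw [entryTime] at hlt2
    obtain ⟨a, ha, halt⟩ := sInf_lt_iff.mp hlt2
    have hTx : ‖T (t' - s₀) x‖ ≤ Real.exp (-(r : ℝ)) := ha (t' - s₀) (by linarith) halt.le
    have ht'eq : t' = s₀ + (t' - s₀) := by ring
    have hcomp : T t' = (T s₀).comp (T (t' - s₀)) := by
      nth_rewrite 1 [ht'eq]
      exact hTmul s₀ (t' - s₀) hs₀pos.le (by linarith)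
    calc ‖T t' x‖ = ‖T s₀ (T (t' - s₀) x)‖ := by rw [hcomp]; rfl
    _ ≤ ‖T s₀‖ * ‖T (t' - s₀) x‖ := (T s₀).le_opNorm _
    _ ≤ Real.exp (-1) * Real.exp (-(r : ℝ)) :=
        mul_le_mul hTs₀ hTx (norm_nonneg _) (Real.exp_pos _).le
    _ = Real.exp (-((r + 1 : ℕ) : ℝ)) := by rw [← Real.exp_add]; congr 1; push_cast; ring
  have hballshift : ∀ r : ℕ, ballEntryTime T (r + 1) ≤ ballEntryTime T r + ENNReal.ofReal s₀ := by
    intro r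
    refine iSup₂_le fun x hx => (hshift r x).trans (add_le_add_left ?_ _)
    exact le_iSup₂ (f := fun x (_ : x ∈ {x : X | ‖x‖ ≤ 1}) => entryTime T r x) x hx
  have hrel : ∀ r : ℕ, relEntryTime T r ≤ ENNReal.ofReal s₀ := by
    intro r
    rw [relEntryTime, if_neg (hball_ne (r + 1)), tsub_le_iff_right]
    exact (hballshift r).trans_eq (add_comm _ _)
  constructor
  · have hls : Filter.limsup (fun r => relEntryTime T r) Filter.atTop ≤ ENNReal.ofReal s₀ :=
      Filter.limsup_le_of_le (h := Filter.Eventually.of_forall hrel)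
    exact hls.trans_lt ENNReal.ofReal_lt_top
  · refine ⟨Real.exp 1, Real.exp_pos 1, 1 / s₀, by positivity, fun t ht => ?_⟩
    set m := ⌊t / s₀⌋₊ with hm
    have hdiv : 0 ≤ t / s₀ := div_nonneg ht hs₀pos.le
    have h1 : (m : ℝ) * s₀ ≤ t := by
      have := Nat.floor_le hdiv
      calc (m : ℝ) * s₀ ≤ (t / s₀) * s₀ := mul_le_mul_of_nonneg_right this hs₀pos.le
      _ = t := by field_simp
    have h2 : -(m : ℝ) ≤ 1 - t / s₀ := by
      have := Nat.lt_floor_add_one (t / s₀)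
      linarith
    calc ‖T t‖ ≤ Real.exp (-(m : ℝ)) := hdecay m t h1
    _ ≤ Real.exp (1 - t / s₀) := Real.exp_le_exp.mpr h2
    _ = Real.exp 1 * Real.exp (-(1 / s₀) * t) := by
        rw [← Real.exp_add]; congr 1; field_simp; ring
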